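/- Let W be a regular reachability or safety objective over C and M a chromatic memory structure. If M suffices to play optimally for W in all finite one-player arenas of Player 1, then W is M-strongly-monotone. -/

import Mathlib

set_option autoImplicit false

namespace RegularMemory

/-- Concatenation of a finite word with an infinite word. -/
def wcat {C : Type} (w : List C) (x : ℕ → C) : ℕ → C := fun n =>
  if h : n < w.length then w.get ⟨n, h⟩ else x (n - w.length)

/-- The infinite word `w^ω` (junk value if `w` is empty). -/
noncomputable def wpow {C : Type} [Nonempty C] : List C → ℕ → C
  | [] => fun _ => Classical.arbitrary C
  | (a :: l) => fun n => (a :: l).get ⟨n % (a :: l).length, Nat.mod_lt n (Nat.succ_pos _)⟩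

/-- Winning continuations `w⁻¹W` of the finite word `w` for the objective `W`. -/
def contAfter {C : Type} (W : Set (ℕ → C)) (w : List C) : Set (ℕ → C) :=
  {x | wcat w x ∈ W}

/-- Prefix preorder `w₁ ⪯_W w₂`. -/
def prefLe {C : Type} (W : Set (ℕ → C)) (w₁ w₂ : List C) : Prop :=
  contAfter W w₁ ⊆ contAfter W w₂

/-- Strict prefix relation `w₁ ≺_W w₂`. -/
def prefLt {C : Type} (W : Set (ℕ → C)) (w₁ w₂ : List C) : Prop :=
  prefLe W w₁ w₂ ∧ ¬ prefLe W w₂ w₁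

/-- Comparability for the prefix preorder. -/
def PrefComparable {C : Type} (W : Set (ℕ → C)) (w₁ w₂ : List C) : Prop :=
  prefLe W w₁ w₂ ∨ prefLe W w₂ w₁

/-- The general reachability objective derived from `A`: infinite words with a prefix in `A`. -/
def ReachObj {C : Type} (A : Set (List C)) : Set (ℕ → C) :=
  {x | ∃ n : ℕ, (List.ofFn fun i : Fin n => x i) ∈ A}

/-- The general safety objective derived from `A`. -/
def SafeObj {C : Type} (A : Set (List C)) : Set (ℕ → C) :=
  (ReachObj A)ᶜ

/-- The prefix preorder of `W` has finitely many equivalence classes. -/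
def FinClasses {C : Type} (W : Set (ℕ → C)) : Prop :=
  (Set.range fun w : List C => contAfter W w).Finite

/-- The prefix preorder of `W` is well-founded:
every nonempty chain contains a minimal element. -/
def PrefWellFounded {C : Type} (W : Set (ℕ → C)) : Prop :=
  ∀ S : Set (List C), S.Nonempty →
    (∀ w₁ ∈ S, ∀ w₂ ∈ S, PrefComparable W w₁ w₂) →
    ∃ w₀ ∈ S, ∀ w ∈ S, ¬ prefLt W w w₀

/-- Chromatic memory structure. -/
structure MemStruct (C : Type) where
  M : Type
  init : M
  upd : M → C → M

/-- Extension of the update function to finite words. -/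
def MemStruct.updStar {C : Type} (N : MemStruct C) (m : N.M) (w : List C) : N.M :=
  w.foldl N.upd m

/-- The trivial one-state memory structure. -/
def trivMem (C : Type) : MemStruct C :=
  ⟨Unit, (), fun _ _ => ()⟩

/-- `W` is `N`-strongly-monotone. -/
def StronglyMonotone {C : Type} (N : MemStruct C) (W : Set (ℕ → C)) : Prop :=
  ∀ w₁ w₂ : List C,
    N.updStar N.init w₁ = N.updStar N.init w₂ → PrefComparable W w₁ w₂

/-- `W` is `N`-progress-consistent. -/
def ProgressConsistent {C : Type} [Nonempty C] (N : MemStruct C) (W : Set (ℕ → C)) : Prop :=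
  ∀ (m : N.M) (w₁ w₂ : List C),
    N.updStar N.init w₁ = m → N.updStar m w₂ = m →
    prefLt W w₁ (w₁ ++ w₂) → wcat w₁ (wpow w₂) ∈ W

/-- Two-player arena with colored edges; Player-1 vertices have outgoing edges
(so that strategies of Player 1 exist). -/
structure Arena (C : Type) where
  V : Type
  P1 : V → Prop
  E : Set (V × C × V)
  succ : ∀ v : V, P1 v → ∃ e ∈ E, e.1 = v

namespace Arena

/-- Valid histories starting at a given vertex. -/
def HistFrom {C : Type} (A : Arena C) : A.V → List (A.V × C × A.V) → Prop
  | _, [] => True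
  | v, e :: l => e ∈ A.E ∧ e.1 = v ∧ HistFrom A e.2.2 l

/-- Endpoint of a history. -/
def endFrom {C : Type} (A : Arena C) : A.V → List (A.V × C × A.V) → A.V
  | v, [] => v
  | _, e :: l => endFrom A e.2.2 l

/-- Infinite plays from a vertex. -/
def PlayFrom {C : Type} (A : Arena C) (v : A.V) (π : ℕ → A.V × C × A.V) : Prop :=
  (π 0).1 = v ∧ ∀ n : ℕ, π n ∈ A.E ∧ (π n).2.2 = (π (n + 1)).1

/-- Colors along a play. -/
def playCol {C V : Type} (π : ℕ → V × C × V) : ℕ → C :=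
  fun n => (π n).2.1

/-- Strategies of Player 1: on every valid history ending in a Player-1 vertex,
the strategy picks an edge leaving that vertex. -/
structure Strategy {C : Type} (A : Arena C) where
  next : A.V → List (A.V × C × A.V) → A.V × C × A.V
  legal : ∀ (v : A.V) (l : List (A.V × C × A.V)),
    A.HistFrom v l → A.P1 (A.endFrom v l) →
      next v l ∈ A.E ∧ (next v l).1 = A.endFrom v l

/-- A play from `v` is consistent with the strategy `σ`. -/
def Strategy.Consistent {C : Type} {A : Arena C} (σ : A.Strategy) (v : A.V)
    (π : ℕ → A.V × C × A.V) : Prop :=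
  ∀ n : ℕ, A.P1 (A.endFrom v (List.ofFn fun i : Fin n => π i)) →
    π n = σ.next v (List.ofFn fun i : Fin n => π i)

/-- `σ` is winning from `v` for the objective `W`. -/
def Strategy.WinningFrom {C : Type} {A : Arena C} (σ : A.Strategy)
    (W : Set (ℕ → C)) (v : A.V) : Prop :=
  ∀ π : ℕ → A.V × C × A.V, A.PlayFrom v π → σ.Consistent v π → playCol π ∈ W

/-- `σ` is optimal in `(A, W)`: winning from every vertex from which
Player 1 has some winning strategy. -/
def Strategy.Optimal {C : Type} {A : Arena C} (σ : A.Strategy) (W : Set (ℕ → C)) : Prop :=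
  ∀ v : A.V, (∃ σ' : A.Strategy, σ'.WinningFrom W v) → σ.WinningFrom W v

/-- `σ` is based on the memory structure `N`. -/
def Strategy.BasedOn {C : Type} {A : Arena C} (σ : A.Strategy) (N : MemStruct C) : Prop :=
  ∃ nxt : A.V → N.M → A.V × C × A.V,
    ∀ (v : A.V) (l : List (A.V × C × A.V)),
      A.HistFrom v l → A.P1 (A.endFrom v l) →
        σ.next v l = nxt (A.endFrom v l) (N.updStar N.init (l.map fun e => e.2.1))

/-- Finite arena: finitely many vertices and edges. -/
def IsFinite {C : Type} (A : Arena C) : Prop := Finite A.V ∧ A.E.Finite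

/-- Finitely branching arena. -/
def FinBranching {C : Type} (A : Arena C) : Prop :=
  ∀ v : A.V, {e ∈ A.E | e.1 = v}.Finite

/-- One-player arena of Player 1. -/
def OneP1 {C : Type} (A : Arena C) : Prop := ∀ v : A.V, A.P1 v

end Arena

/-- `N` suffices to play optimally for `W` in all arenas of the class `P`. -/
def SufficesIn {C : Type} (N : MemStruct C) (W : Set (ℕ → C))
    (P : Arena C → Prop) : Prop :=
  ∀ A : Arena C, P A → ∃ σ : A.Strategy, σ.BasedOn N ∧ σ.Optimal W

/-- Deterministic automaton (with complete transition function). -/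
structure DetAuto (C : Type) where
  Q : Type
  init : Q
  δ : Q → C → Q
  F : Set Q

/-- Extension of the transition function to finite words. -/
def DetAuto.δStar {C : Type} (D : DetAuto C) (q : D.Q) (w : List C) : D.Q :=
  w.foldl D.δ q

/-- Language recognized by `D`. -/
def DetAuto.lang {C : Type} (D : DetAuto C) : Set (List C) :=
  {w | D.δStar D.init w ∈ D.F}

/-- Prefix preorder extended to automaton states. -/
def statePrefLe {C : Type} (D : DetAuto C) (W : Set (ℕ → C)) (q₁ q₂ : D.Q) : Prop :=
  ∀ w₁ w₂ : List C,
    D.δStar D.init w₁ = q₁ → D.δStar D.init w₂ = q₂ → prefLe W w₁ w₂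

def statePrefLt {C : Type} (D : DetAuto C) (W : Set (ℕ → C)) (q₁ q₂ : D.Q) : Prop :=
  statePrefLe D W q₁ q₂ ∧ ¬ statePrefLe D W q₂ q₁

def StateComparable {C : Type} (D : DetAuto C) (W : Set (ℕ → C)) (q₁ q₂ : D.Q) : Prop :=
  statePrefLe D W q₁ q₂ ∨ statePrefLe D W q₂ q₁

/-- Monotone decomposition of `D` with `k` sets. -/
def MonotoneDecomposition {C : Type} (D : DetAuto C) (W : Set (ℕ → C))
    {k : ℕ} (Γ : Fin k → Set D.Q) : Prop :=
  (∀ q : D.Q, ∃ i : Fin k, q ∈ Γ i) ∧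
  (∀ (c : C) (i : Fin k), ∃ j : Fin k, (fun q => D.δ q c) '' Γ i ⊆ Γ j) ∧
  (∀ i : Fin k, ∀ q₁ ∈ Γ i, ∀ q₂ ∈ Γ i, StateComparable D W q₁ q₂)

end RegularMemory

namespace RegularMemory

variable {C : Type}

def xpre (x : ℕ → C) (n : ℕ) : List C := List.ofFn fun i : Fin n => x i

@[simp] lemma xpre_length (x : ℕ → C) (n : ℕ) : (xpre x n).length = n := by
  simp [xpre]

lemma xpre_getElem (x : ℕ → C) {n i : ℕ} (h : i < (xpre x n).length) :
    (xpre x n)[i] = x i := by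
  simp [xpre]

lemma wcat_lt (w : List C) (x : ℕ → C) {n : ℕ} (h : n < w.length) :
    wcat w x n = w[n] := dif_pos h

lemma wcat_ge (w : List C) (x : ℕ → C) {n : ℕ} (h : w.length ≤ n) :
    wcat w x n = x (n - w.length) := dif_neg (by omega)

lemma wcat_append (u s : List C) (x : ℕ → C) :
    wcat (u ++ s) x = wcat u (wcat s x) := by
  funext n
  rcases lt_or_ge n u.length with h | h
  · rw [wcat_lt _ _ (by simp; omega), wcat_lt _ _ h]
    exact List.getElem_append_left h
  · rcases lt_or_ge n (u.length + s.length) with h2 | h2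
    · rw [wcat_lt _ _ (by simp; omega), wcat_ge _ _ h, wcat_lt _ _ (by omega)]
      exact List.getElem_append_right h
    · rw [wcat_ge _ _ (by simp; omega), wcat_ge _ _ h, wcat_ge _ _ (by omega)]
      congr 1
      simp; omega

lemma xpre_succ (x : ℕ → C) (n : ℕ) : xpre x (n + 1) = xpre x n ++ [x n] := by
  apply List.ext_getElem (by simp)
  intro i h1 h2
  rcases lt_or_ge i n with h | h
  · rw [xpre_getElem, List.getElem_append_left (by simpa using h), xpre_getElem]
  · have : i = n := by simp at h1; omega
    subst this
    rw [xpre_getElem, List.getElem_append_right (by simp)]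
    simp

lemma wcat_xpre (x : ℕ → C) (n : ℕ) : wcat (xpre x n) (fun m => x (n + m)) = x := by
  funext m
  rcases lt_or_ge m n with h | h
  · rw [wcat_lt _ _ (by simpa using h), xpre_getElem]
  · rw [wcat_ge _ _ (by simpa using h)]
    simp
    congr 1; omega

lemma ofFn_wcat_le (u : List C) (x y : ℕ → C) {n : ℕ} (h : n ≤ u.length) :
    (List.ofFn fun i : Fin n => wcat u x i) = List.ofFn fun i : Fin n => wcat u y i := by
  apply List.ext_getElem (by simp)
  intro i h1 h2
  have hi : i < n := by simpa using h1
  simp only [List.getElem_ofFn]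
  rw [wcat_lt _ _ (by omega), wcat_lt _ _ (by omega)]

lemma ofFn_wcat_split (u : List C) (x : ℕ → C) (m : ℕ) :
    (List.ofFn fun i : Fin (u.length + m) => wcat u x i) = u ++ xpre x m := by
  apply List.ext_getElem (by simp)
  intro i h1 h2
  simp only [List.getElem_ofFn]
  rcases lt_or_ge i u.length with h | h
  · rw [wcat_lt _ _ h, List.getElem_append_left h]
  · rw [wcat_ge _ _ h, List.getElem_append_right h, xpre_getElem]

lemma mem_contAfter_append {W : Set (ℕ → C)} (u s : List C) (y : ℕ → C) :
    y ∈ contAfter W (u ++ s) ↔ wcat s y ∈ contAfter W u := by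
  simp [contAfter, wcat_append]

lemma contAfter_congr_append {W : Set (ℕ → C)} {u u' : List C}
    (h : contAfter W u = contAfter W u') (s : List C) :
    contAfter W (u ++ s) = contAfter W (u' ++ s) :=
  Set.ext fun y => by rw [mem_contAfter_append, mem_contAfter_append, h]

lemma wpow_eq_get [Nonempty C] (r : List C) (hr : r ≠ []) (n : ℕ) :
    wpow r n = r[n % r.length]'(Nat.mod_lt _ (List.length_pos_iff.mpr hr)) := by
  cases r with
  | nil => exact absurd rfl hr
  | cons a l => rfl

end RegularMemory
namespace RegularMemory

variable {C : Type}

lemma pigeon {W : Set (ℕ → C)} (hreg : FinClasses W) (c : List C) (x : ℕ → C) (n₀ : ℕ) :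
    ∃ i j, n₀ ≤ i ∧ i < j ∧ contAfter W (c ++ xpre x i) = contAfter W (c ++ xpre x j) := by
  obtain ⟨i, hi, j, hj, hne, heq⟩ :=
    (Set.Ici_infinite n₀).exists_ne_map_eq_of_mapsTo
      (f := fun k => contAfter W (c ++ xpre x k))
      (fun k _ => Set.mem_range_self _) hreg
  rcases lt_or_gt_of_ne hne with h | h
  · exact ⟨i, j, hi, h, heq⟩
  · exact ⟨j, i, hj, h, heq.symm⟩

section Transfer

variable [Nonempty C] {W : Set (ℕ → C)} (c : List C) (x : ℕ → C) {i j : ℕ}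

/-- the periodic word built from `x` with period segment `[i, j)`. -/
noncomputable def zper (x : ℕ → C) (i j : ℕ) : ℕ → C :=
  wcat (xpre x i) (wpow (List.ofFn fun t : Fin (j - i) => x (i + t)))

lemma zper_eq_of_lt (hij : i < j) {m : ℕ} (hm : m < j) : zper x i j m = x m := by
  unfold zper
  rcases lt_or_ge m i with h | h
  · rw [wcat_lt _ _ (by simpa using h), xpre_getElem]
  · rw [wcat_ge _ _ (by simpa using h)]
    rw [wpow_eq_get _ (by simp; omega)]
    simp only [xpre_length, List.getElem_ofFn, List.length_ofFn]
    have hh : (m - i) % (j - i) = m - i := Nat.mod_eq_of_lt (by omega)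
    rw [hh]
    congr 1
    omega

lemma zper_periodic (hij : i < j) {m : ℕ} (hm : i ≤ m) :
    zper x i j (m + (j - i)) = zper x i j m := by
  unfold zper
  rw [wcat_ge _ _ (by simpa using by omega : (xpre x i).length ≤ m + (j - i)),
      wcat_ge _ _ (by simpa using hm)]
  rw [wpow_eq_get _ (by simp; omega), wpow_eq_get _ (by simp; omega)]
  simp only [List.length_ofFn, xpre_length]
  congr 1
  rw [show m + (j - i) - i = (m - i) + (j - i) by omega, Nat.add_mod_right]

lemma xpre_zper_eq (hij : i < j) {k : ℕ} (hk : k ≤ j) : xpre (zper x i j) k = xpre x k := by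
  apply List.ext_getElem (by simp)
  intro t h1 h2
  rw [xpre_getElem, xpre_getElem]
  exact zper_eq_of_lt x hij (by simp at h1; omega)

lemma transfer (hij : i < j)
    (hcl : contAfter W (c ++ xpre x i) = contAfter W (c ++ xpre x j)) :
    ∀ k, ∃ k'' ≤ j, contAfter W (c ++ xpre (zper x i j) k) = contAfter W (c ++ xpre x k'') := by
  set e := j - i with he
  have he0 : 0 < e := by omega
  have key : ∀ d, contAfter W (c ++ xpre (zper x i j) (i + e + d))
      = contAfter W (c ++ xpre (zper x i j) (i + d)) := by
    intro d
    induction d with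
    | zero =>
      simp only [Nat.add_zero]
      have h1 : i + e = j := by omega
      rw [h1, xpre_zper_eq x hij (le_refl j), xpre_zper_eq x hij (by omega)]
      exact hcl.symm
    | succ d ih =>
      have h1 : i + e + (d + 1) = (i + e + d) + 1 := by omega
      have h2 : i + (d + 1) = (i + d) + 1 := by omega
      rw [h1, h2, xpre_succ, xpre_succ]
      have hz : zper x i j (i + e + d) = zper x i j (i + d) := by
        have : i + e + d = (i + d) + (j - i) := by omega
        rw [this]
        exact zper_periodic x hij (by omega)
      rw [hz, ← List.append_assoc, ← List.append_assoc]
      exact contAfter_congr_append ih _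
  have red : ∀ d, contAfter W (c ++ xpre (zper x i j) (i + d))
      = contAfter W (c ++ xpre (zper x i j) (i + d % e)) := by
    intro d
    induction d using Nat.strong_induction_on with
    | _ d IH =>
      rcases lt_or_ge d e with h | h
      · rw [Nat.mod_eq_of_lt h]
      · have h1 : i + d = i + e + (d - e) := by omega
        have hme : d % e = (d - e) % e := Nat.mod_eq_sub_mod h
        rw [h1, key (d - e), IH (d - e) (by omega), hme]
  intro k
  rcases le_or_gt k j with hk | hk
  · exact ⟨k, hk, by rw [xpre_zper_eq x hij hk]⟩
  · have h1 : k = i + (k - i) := by omega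
    have hlt : (k - i) % e < e := Nat.mod_lt _ he0
    refine ⟨i + (k - i) % e, by omega, ?_⟩
    conv_lhs => rw [h1]
    rw [red (k - i), xpre_zper_eq x hij (by omega)]

end Transfer

end RegularMemory
namespace RegularMemory

variable {C : Type}

lemma contAfter_reach_univ {A : Set (List C)} {u : List C} (hu : u ∈ A) :
    contAfter (ReachObj A) u = Set.univ := by
  ext y
  simp only [Set.mem_univ, iff_true, contAfter, Set.mem_setOf_eq, ReachObj]
  refine ⟨u.length, ?_⟩
  have := ofFn_wcat_split u y 0
  simp only [Nat.add_zero] at this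
  rw [this]
  simpa [xpre] using hu

lemma contAfter_safe_empty {A : Set (List C)} {u : List C} (hu : u ∈ A) :
    contAfter (SafeObj A) u = ∅ := by
  ext y
  simp only [Set.mem_empty_iff_false, iff_false, contAfter, Set.mem_setOf_eq, SafeObj,
    Set.mem_compl_iff, not_not]
  refine ⟨u.length, ?_⟩
  have := ofFn_wcat_split u y 0
  simp only [Nat.add_zero] at this
  rw [this]
  simpa [xpre] using hu

lemma shift_mem_contAfter {W : Set (ℕ → C)} {u : List C} {x : ℕ → C} (k : ℕ)
    (hmem : wcat u x ∈ W) : (fun m => x (k + m)) ∈ contAfter W (u ++ xpre x k) := by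
  simp only [contAfter, Set.mem_setOf_eq, wcat_append, wcat_xpre]
  exact hmem

lemma exists_periodic_witness [Nonempty C] {W : Set (ℕ → C)}
    (hform : ∃ A : Set (List C), W = ReachObj A ∨ W = SafeObj A)
    (hreg : FinClasses W) {a b : List C} {x : ℕ → C}
    (hxa : x ∈ contAfter W a) (hxb : x ∉ contAfter W b)
    (hba : ¬ prefLe W b a) :
    ∃ p r : List C, r ≠ [] ∧
      wcat p (wpow r) ∈ contAfter W a ∧ wcat p (wpow r) ∉ contAfter W b := by
  obtain ⟨A, hW | hW⟩ := hform
  · -- Reach case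
    subst hW
    obtain ⟨n, hn⟩ := hxa
    rcases le_or_gt n a.length with hle | hlt
    · exfalso
      refine hba fun y _ => ⟨n, ?_⟩
      rwa [ofFn_wcat_le a y x hle]
    · set n₀ := n - a.length with hn₀
      have hnn : n = a.length + n₀ := by omega
      rw [hnn, ofFn_wcat_split] at hn
      -- hn : a ++ xpre x n₀ ∈ A
      obtain ⟨i, j, hin₀, hij, hcl⟩ := pigeon hreg b x n₀
      refine ⟨xpre x i, List.ofFn fun t : Fin (j - i) => x (i + t), by simp; omega, ?_, ?_⟩
      · -- z ∈ contAfter a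
        refine ⟨a.length + n₀, ?_⟩
        rw [ofFn_wcat_split]
        have : xpre (zper x i j) n₀ = xpre x n₀ := by
          apply List.ext_getElem (by simp)
          intro t h1 h2
          rw [xpre_getElem, xpre_getElem]
          exact zper_eq_of_lt x hij (by simp at h1; omega)
        show a ++ xpre (zper x i j) n₀ ∈ A
        rwa [this]
      · -- z ∉ contAfter b
        rintro ⟨n', hn'⟩
        rcases le_or_gt n' b.length with hle' | hlt'
        · refine hxb ⟨n', ?_⟩
          rw [ofFn_wcat_le b x (zper x i j) hle']
          exact hn'
        · set k := n' - b.length with hk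
          have hnn' : n' = b.length + k := by omega
          rw [hnn', ofFn_wcat_split] at hn'
          -- hn' : b ++ xpre (zper x i j) k ∈ A
          obtain ⟨k'', _, hkk⟩ := transfer b x hij hcl k
          have huniv : contAfter (ReachObj A) (b ++ xpre x k'') = Set.univ := by
            rw [← hkk]
            exact contAfter_reach_univ hn'
          refine hxb ?_
          have : (fun m => x (k'' + m)) ∈ contAfter (ReachObj A) (b ++ xpre x k'') := by
            rw [huniv]; trivial
          rw [mem_contAfter_append, wcat_xpre] at this
          exact this
  · -- Safe case
    subst hW
    have hxb' : wcat b x ∈ ReachObj A := by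
      simpa [contAfter, SafeObj] using hxb
    obtain ⟨n, hn⟩ := hxb'
    rcases le_or_gt n b.length with hle | hlt
    · exfalso
      refine hba fun y hy => absurd hy ?_
      intro hy'
      exact hy' ⟨n, by rwa [ofFn_wcat_le b y x hle]⟩
    · set n₀ := n - b.length with hn₀
      have hnn : n = b.length + n₀ := by omega
      rw [hnn, ofFn_wcat_split] at hn
      -- hn : b ++ xpre x n₀ ∈ A
      obtain ⟨i, j, hin₀, hij, hcl⟩ := pigeon hreg a x n₀
      refine ⟨xpre x i, List.ofFn fun t : Fin (j - i) => x (i + t), by simp; omega, ?_, ?_⟩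
      · -- z ∈ contAfter a : wcat a z ∈ SafeObj A
        rintro ⟨n', hn'⟩
        rcases le_or_gt n' a.length with hle' | hlt'
        · exact hxa ⟨n', by rw [ofFn_wcat_le a x (zper x i j) hle']; exact hn'⟩
        · set k := n' - a.length with hk
          have hnn' : n' = a.length + k := by omega
          rw [hnn', ofFn_wcat_split] at hn'
          obtain ⟨k'', _, hkk⟩ := transfer a x hij hcl k
          have hempty : contAfter (SafeObj A) (a ++ xpre x k'') = ∅ := by
            rw [← hkk]
            exact contAfter_safe_empty hn'
          have : (fun m => x (k'' + m)) ∈ contAfter (SafeObj A) (a ++ xpre x k'') :=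
            shift_mem_contAfter k'' hxa
          rw [hempty] at this
          exact this
      · -- z ∉ contAfter b
        intro hmem
        refine hmem ⟨b.length + n₀, ?_⟩
        rw [ofFn_wcat_split]
        have : xpre (zper x i j) n₀ = xpre x n₀ := by
          apply List.ext_getElem (by simp)
          intro t h1 h2
          rw [xpre_getElem, xpre_getElem]
          exact zper_eq_of_lt x hij (by simp at h1; omega)
        show b ++ xpre (zper x i j) n₀ ∈ A
        rwa [this]

end RegularMemory
namespace RegularMemory

variable {C : Type}

namespace Arena

lemma endFrom_append (A : Arena C) (v : A.V) (l : List (A.V × C × A.V)) (e : A.V × C × A.V) :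
    A.endFrom v (l ++ [e]) = e.2.2 := by
  induction l generalizing v with
  | nil => rfl
  | cons e' l ih => exact ih e'.2.2

lemma histFrom_append (A : Arena C) (v : A.V) (l : List (A.V × C × A.V)) (e : A.V × C × A.V) :
    A.HistFrom v (l ++ [e]) ↔ A.HistFrom v l ∧ e ∈ A.E ∧ e.1 = A.endFrom v l := by
  induction l generalizing v with
  | nil => simp [HistFrom, endFrom]
  | cons e' l ih =>
    constructor
    · rintro ⟨h1, h2, h3⟩
      obtain ⟨h4, h5, h6⟩ := (ih e'.2.2).mp h3
      exact ⟨⟨h1, h2, h4⟩, h5, h6⟩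
    · rintro ⟨⟨h1, h2, h3⟩, h4, h5⟩
      exact ⟨h1, h2, (ih _).mpr ⟨h3, h4, h5⟩⟩

end Arena

lemma ofFn_succ_concat {α : Type*} (π : ℕ → α) (n : ℕ) :
    (List.ofFn fun i : Fin (n + 1) => π i) = (List.ofFn fun i : Fin n => π i) ++ [π n] := by
  apply List.ext_getElem (by simp)
  intro i h1 h2
  have hi : i < n + 1 := by simpa using h1
  simp only [List.getElem_ofFn]
  rcases lt_or_ge i n with h | h
  · rw [List.getElem_append_left (by simpa using h)]
    simp
  · have : i = n := by omega
    subst this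
    rw [List.getElem_append_right (by simp)]
    simp

lemma endFrom_play {A : Arena C} {v : A.V} {π : ℕ → A.V × C × A.V}
    (hp : A.PlayFrom v π) (n : ℕ) :
    A.endFrom v (List.ofFn fun i : Fin n => π i) = (π n).1 := by
  induction n with
  | zero => exact hp.1.symm
  | succ n ih =>
    rw [ofFn_succ_concat, Arena.endFrom_append]
    exact (hp.2 n).2

lemma histFrom_play {A : Arena C} {v : A.V} {π : ℕ → A.V × C × A.V}
    (hp : A.PlayFrom v π) (n : ℕ) :
    A.HistFrom v (List.ofFn fun i : Fin n => π i) := by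
  induction n with
  | zero => trivial
  | succ n ih =>
    rw [ofFn_succ_concat, Arena.histFrom_append]
    exact ⟨ih, (hp.2 n).1, (endFrom_play hp n).symm⟩

/-- The history of the unique play generated by a strategy from a vertex. -/
def histOf {A : Arena C} (σ : A.Strategy) (v₀ : A.V) : ℕ → List (A.V × C × A.V)
  | 0 => []
  | n + 1 => histOf σ v₀ n ++ [σ.next v₀ (histOf σ v₀ n)]

/-- The unique play generated by a strategy from a vertex (in a one-player arena). -/
def playOf {A : Arena C} (σ : A.Strategy) (v₀ : A.V) (n : ℕ) : A.V × C × A.V :=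
  σ.next v₀ (histOf σ v₀ n)

lemma ofFn_playOf {A : Arena C} (σ : A.Strategy) (v₀ : A.V) (n : ℕ) :
    (List.ofFn fun i : Fin n => playOf σ v₀ i) = histOf σ v₀ n := by
  induction n with
  | zero => rfl
  | succ n ih => rw [ofFn_succ_concat, ih]; rfl

lemma histOf_valid {A : Arena C} (hP1 : ∀ v, A.P1 v) (σ : A.Strategy) (v₀ : A.V) (n : ℕ) :
    A.HistFrom v₀ (histOf σ v₀ n) := by
  induction n with
  | zero => trivial
  | succ n ih =>
    show A.HistFrom v₀ (histOf σ v₀ n ++ [σ.next v₀ (histOf σ v₀ n)])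
    rw [Arena.histFrom_append]
    obtain ⟨h1, h2⟩ := σ.legal v₀ (histOf σ v₀ n) ih (hP1 _)
    exact ⟨ih, h1, h2⟩

lemma playOf_isPlay {A : Arena C} (hP1 : ∀ v, A.P1 v) (σ : A.Strategy) (v₀ : A.V) :
    A.PlayFrom v₀ (playOf σ v₀) := by
  constructor
  · exact (σ.legal v₀ [] trivial (hP1 _)).2
  · intro n
    refine ⟨(σ.legal v₀ (histOf σ v₀ n) (histOf_valid hP1 σ v₀ n) (hP1 _)).1, ?_⟩
    have h2 := (σ.legal v₀ (histOf σ v₀ (n + 1)) (histOf_valid hP1 σ v₀ (n + 1)) (hP1 _)).2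
    show (playOf σ v₀ n).2.2 = (playOf σ v₀ (n + 1)).1
    rw [show (playOf σ v₀ (n+1)).1 = A.endFrom v₀ (histOf σ v₀ (n+1)) from h2]
    show _ = A.endFrom v₀ (histOf σ v₀ n ++ [σ.next v₀ (histOf σ v₀ n)])
    rw [Arena.endFrom_append]
    rfl

lemma playOf_consistent {A : Arena C} (σ : A.Strategy) (v₀ : A.V) :
    σ.Consistent v₀ (playOf σ v₀) := by
  intro n _
  rw [ofFn_playOf]
  rfl

lemma histOf_length {A : Arena C} (σ : A.Strategy) (v₀ : A.V) (n : ℕ) :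
    (histOf σ v₀ n).length = n := by
  rw [← ofFn_playOf]; simp

end RegularMemory
namespace RegularMemory

variable {C : Type}

/-- `some ⟨t⟩` if `t < L`, else `none`. -/
def finOpt (L t : ℕ) : Option (Fin L) := if h : t < L then some ⟨t, h⟩ else none

/-- `some ⟨t⟩` if `t < L`, else `some ⟨p⟩` if `p < L`, else `none`. -/
def mkF (L p t : ℕ) : Option (Fin L) :=
  if h : t < L then some ⟨t, h⟩ else if h' : p < L then some ⟨p, h'⟩ else none

/-- Position in the lasso after `m` steps. -/
def gfun (p r m : ℕ) : ℕ := if m < p + r then m else p + (m - p) % r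

lemma gfun_lt {p r : ℕ} (hr : 0 < r) (m : ℕ) : gfun p r m < p + r := by
  unfold gfun
  split
  · omega
  · have : (m - p) % r < r := Nat.mod_lt _ hr
    omega

lemma gfun_zero {p r : ℕ} (hr : 0 < r) : gfun p r 0 = 0 := by
  unfold gfun
  split
  · rfl
  · omega

lemma gfun_succ {p r : ℕ} (hr : 0 < r) (m : ℕ) :
    gfun p r (m + 1) = if gfun p r m + 1 < p + r then gfun p r m + 1 else p := by
  have key : ∀ a, (a + 1) % r = if a % r + 1 = r then 0 else a % r + 1 := by
    intro a
    conv_lhs => rw [← Nat.div_add_mod a r, Nat.add_assoc, Nat.mul_add_mod]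
    split
    · next h => rw [h, Nat.mod_self]
    · next h =>
      have := Nat.mod_lt a hr
      exact Nat.mod_eq_of_lt (by omega)
  rcases lt_or_ge m (p + r) with hm | hm
  · rcases lt_or_ge (m + 1) (p + r) with h1 | h1
    · simp only [gfun, if_pos h1, if_pos hm, if_pos h1]
    · have hm1 : m + 1 = p + r := by omega
      simp only [gfun, if_neg (by omega : ¬ m + 1 < p + r), if_pos hm]
      rw [show m + 1 - p = r by omega, Nat.mod_self, Nat.add_zero]
  · have ht : (m - p) % r < r := Nat.mod_lt _ hr
    have hkey := key (m - p)
    rcases Nat.lt_or_ge ((m - p) % r + 1) r with h2 | h2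
    · have hmod : (m - p + 1) % r = (m - p) % r + 1 := by rw [hkey, if_neg (by omega)]
      simp only [gfun, if_neg (by omega : ¬ m + 1 < p + r), if_neg (by omega : ¬ m < p + r),
        show m + 1 - p = (m - p) + 1 by omega, hmod,
        if_pos (by omega : p + (m - p) % r + 1 < p + r)]
      omega
    · have hmod : (m - p + 1) % r = 0 := by rw [hkey, if_pos (by omega)]
      simp only [gfun, if_neg (by omega : ¬ m + 1 < p + r), if_neg (by omega : ¬ m < p + r),
        show m + 1 - p = (m - p) + 1 by omega, hmod,
        if_neg (by omega : ¬ (p + (m - p) % r + 1 < p + r))]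
      omega

lemma mkF_gfun {p r : ℕ} (hr : 0 < r) (m : ℕ) :
    mkF (p + r) p (gfun p r m + 1) = some ⟨gfun p r (m + 1), gfun_lt hr (m + 1)⟩ := by
  unfold mkF
  rcases lt_or_ge (gfun p r m + 1) (p + r) with h | h
  · rw [dif_pos h]
    refine congrArg some (Fin.ext ?_)
    show gfun p r m + 1 = gfun p r (m + 1)
    rw [gfun_succ hr m, if_pos h]
  · rw [dif_neg (by omega), dif_pos (by omega)]
    refine congrArg some (Fin.ext ?_)
    show p = gfun p r (m + 1)
    rw [gfun_succ hr m, if_neg (by omega)]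

end RegularMemory
namespace RegularMemory

variable {C : Type}

lemma lasso_get [Nonempty C] (p r : List C) (hr : r ≠ []) (m : ℕ)
    (h : gfun p.length r.length m < (p ++ r).length) :
    (p ++ r)[gfun p.length r.length m] = wcat p (wpow r) m := by
  have hr0 : 0 < r.length := List.length_pos_iff.mpr hr
  rcases lt_or_ge m p.length with hm | hm
  · have hgm : gfun p.length r.length m = m := by unfold gfun; rw [if_pos (by omega)]
    rw [wcat_lt _ _ hm]
    rw [List.getElem_append_left (by omega : gfun p.length r.length m < p.length)]
    congr 1
  · have hgm : gfun p.length r.length m = p.length + (m - p.length) % r.length := by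
      unfold gfun
      split
      · rw [Nat.mod_eq_of_lt (by omega)]; omega
      · rfl
    rw [wcat_ge _ _ hm, wpow_eq_get r hr]
    rw [List.getElem_append_right (by omega : p.length ≤ gfun p.length r.length m)]
    congr 1
    omega

section GameDefs

variable (c₀ : C) (w₁ w₂ p₁ r₁ p₂ r₂ : List C)

abbrev gS : Type :=
  (Fin w₁.length ⊕ Fin w₂.length) ⊕
    (Fin (p₁.length + r₁.length) ⊕ Fin (p₂.length + r₂.length))

abbrev gV : Type := Option (gS w₁ w₂ p₁ r₁ p₂ r₂)

def ι1 : Fin w₁.length → gS w₁ w₂ p₁ r₁ p₂ r₂ := fun i => Sum.inl (Sum.inl i)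
def ι2 : Fin w₂.length → gS w₁ w₂ p₁ r₁ p₂ r₂ := fun i => Sum.inl (Sum.inr i)
def ιA : Fin (p₁.length + r₁.length) → gS w₁ w₂ p₁ r₁ p₂ r₂ := fun j => Sum.inr (Sum.inl j)
def ιB : Fin (p₂.length + r₂.length) → gS w₁ w₂ p₁ r₁ p₂ r₂ := fun j => Sum.inr (Sum.inr j)

def gf : gV w₁ w₂ p₁ r₁ p₂ r₂ → C × gV w₁ w₂ p₁ r₁ p₂ r₂
  | none => ((p₁ ++ r₁).getD 0 c₀,
      (mkF (p₁.length + r₁.length) p₁.length 1).map (ιA w₁ w₂ p₁ r₁ p₂ r₂))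
  | some (Sum.inl (Sum.inl i)) =>
      (w₁[i.1], (finOpt w₁.length (i.1 + 1)).map (ι1 w₁ w₂ p₁ r₁ p₂ r₂))
  | some (Sum.inl (Sum.inr i)) =>
      (w₂[i.1], (finOpt w₂.length (i.1 + 1)).map (ι2 w₁ w₂ p₁ r₁ p₂ r₂))
  | some (Sum.inr (Sum.inl j)) =>
      ((p₁ ++ r₁)[j.1]'(by rw [List.length_append]; exact j.2),
        (mkF (p₁.length + r₁.length) p₁.length (j.1 + 1)).map (ιA w₁ w₂ p₁ r₁ p₂ r₂))
  | some (Sum.inr (Sum.inr j)) =>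
      ((p₂ ++ r₂)[j.1]'(by rw [List.length_append]; exact j.2),
        (mkF (p₂.length + r₂.length) p₂.length (j.1 + 1)).map (ιB w₁ w₂ p₁ r₁ p₂ r₂))

def galt : C × gV w₁ w₂ p₁ r₁ p₂ r₂ :=
  ((p₂ ++ r₂).getD 0 c₀,
    (mkF (p₂.length + r₂.length) p₂.length 1).map (ιB w₁ w₂ p₁ r₁ p₂ r₂))

def gE : Set (gV w₁ w₂ p₁ r₁ p₂ r₂ × C × gV w₁ w₂ p₁ r₁ p₂ r₂) :=
  (Set.range fun u => (u, gf c₀ w₁ w₂ p₁ r₁ p₂ r₂ u)) ∪ {(none, galt c₀ w₁ w₂ p₁ r₁ p₂ r₂)}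

def gArena : Arena C where
  V := gV w₁ w₂ p₁ r₁ p₂ r₂
  P1 := fun _ => True
  E := gE c₀ w₁ w₂ p₁ r₁ p₂ r₂
  succ := fun v _ => ⟨(v, gf c₀ w₁ w₂ p₁ r₁ p₂ r₂ v), Or.inl ⟨v, rfl⟩, rfl⟩

end GameDefs

section GameLemmas

variable {c₀ : C} {w₁ w₂ p₁ r₁ p₂ r₂ : List C}

lemma edge_cases {e : gV w₁ w₂ p₁ r₁ p₂ r₂ × C × gV w₁ w₂ p₁ r₁ p₂ r₂}
    (he : e ∈ gE c₀ w₁ w₂ p₁ r₁ p₂ r₂) :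
    e = (e.1, gf c₀ w₁ w₂ p₁ r₁ p₂ r₂ e.1) ∨ e = (none, galt c₀ w₁ w₂ p₁ r₁ p₂ r₂) := by
  rcases he with ⟨u, hu⟩ | he
  · left; rw [← hu]
  · right; exact he

lemma forced {v₀ : gV w₁ w₂ p₁ r₁ p₂ r₂} {π : ℕ → gV w₁ w₂ p₁ r₁ p₂ r₂ × C × gV w₁ w₂ p₁ r₁ p₂ r₂}
    (hp : (gArena c₀ w₁ w₂ p₁ r₁ p₂ r₂).PlayFrom v₀ π) (n : ℕ)
    (hne : (π n).1 ≠ none) : π n = ((π n).1, gf c₀ w₁ w₂ p₁ r₁ p₂ r₂ (π n).1) := by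
  rcases edge_cases (hp.2 n).1 with h | h
  · exact h
  · rw [h] at hne
    exact absurd rfl hne

lemma chain_pos {w : List C} {ι : Fin w.length → gS w₁ w₂ p₁ r₁ p₂ r₂}
    (hgf : ∀ i : Fin w.length,
      gf c₀ w₁ w₂ p₁ r₁ p₂ r₂ (some (ι i)) = (w[i.1], (finOpt w.length (i.1 + 1)).map ι))
    {π : ℕ → gV w₁ w₂ p₁ r₁ p₂ r₂ × C × gV w₁ w₂ p₁ r₁ p₂ r₂}
    (hp : (gArena c₀ w₁ w₂ p₁ r₁ p₂ r₂).PlayFrom ((finOpt w.length 0).map ι) π) :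
    ∀ n, n ≤ w.length → (π n).1 = (finOpt w.length n).map ι := by
  intro n
  induction n with
  | zero => intro _; exact hp.1
  | succ n ih =>
    intro hn
    have hlt : n < w.length := by omega
    have hv : (π n).1 = some (ι ⟨n, hlt⟩) := by
      rw [ih (by omega)]; unfold finOpt; rw [dif_pos hlt]; rfl
    have hf := forced hp n (by rw [hv]; exact Option.some_ne_none _)
    have h2 : (π (n + 1)).1 = (π n).2.2 := (hp.2 n).2.symm
    rw [h2, hf]
    show (gf c₀ w₁ w₂ p₁ r₁ p₂ r₂ (π n).1).2 = _
    rw [hv, hgf ⟨n, hlt⟩]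

lemma chain_col {w : List C} {ι : Fin w.length → gS w₁ w₂ p₁ r₁ p₂ r₂}
    (hgf : ∀ i : Fin w.length,
      gf c₀ w₁ w₂ p₁ r₁ p₂ r₂ (some (ι i)) = (w[i.1], (finOpt w.length (i.1 + 1)).map ι))
    {π : ℕ → gV w₁ w₂ p₁ r₁ p₂ r₂ × C × gV w₁ w₂ p₁ r₁ p₂ r₂}
    (hp : (gArena c₀ w₁ w₂ p₁ r₁ p₂ r₂).PlayFrom ((finOpt w.length 0).map ι) π) :
    ∀ n (hn : n < w.length), (π n).2.1 = w[n] := by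
  intro n hn
  have hv : (π n).1 = some (ι ⟨n, hn⟩) := by
    rw [chain_pos hgf hp n (le_of_lt hn)]; unfold finOpt; rw [dif_pos hn]; rfl
  have hf := forced hp n (by rw [hv]; exact Option.some_ne_none _)
  rw [hf]
  show (gf c₀ w₁ w₂ p₁ r₁ p₂ r₂ (π n).1).1 = _
  rw [hv, hgf ⟨n, hn⟩]

lemma tail_pos [Nonempty C] {p r : List C} (hr : r ≠ [])
    {ι : Fin (p.length + r.length) → gS w₁ w₂ p₁ r₁ p₂ r₂}
    (hgf : ∀ (j : Fin (p.length + r.length)) (hj : j.1 < (p ++ r).length),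
      gf c₀ w₁ w₂ p₁ r₁ p₂ r₂ (some (ι j)) =
        ((p ++ r)[j.1]'hj, (mkF (p.length + r.length) p.length (j.1 + 1)).map ι))
    {v₀ : gV w₁ w₂ p₁ r₁ p₂ r₂} {π : ℕ → gV w₁ w₂ p₁ r₁ p₂ r₂ × C × gV w₁ w₂ p₁ r₁ p₂ r₂}
    (hp : (gArena c₀ w₁ w₂ p₁ r₁ p₂ r₂).PlayFrom v₀ π) (n₀ : ℕ)
    (hstart : (π (n₀ + 1)).1 = (mkF (p.length + r.length) p.length 1).map ι) :
    ∀ d, (π (n₀ + 1 + d)).1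
      = some (ι ⟨gfun p.length r.length (1 + d), gfun_lt (List.length_pos_iff.mpr hr) _⟩) := by
  have hr0 : 0 < r.length := List.length_pos_iff.mpr hr
  intro d
  induction d with
  | zero =>
    rw [hstart]
    have h1 := mkF_gfun (p := p.length) (r := r.length) hr0 0
    rw [gfun_zero hr0] at h1
    norm_num at h1
    rw [h1]
    rfl
  | succ d ih =>
    have hf := forced hp (n₀ + 1 + d) (by rw [ih]; exact Option.some_ne_none _)
    have h2 : (π (n₀ + 1 + (d + 1))).1 = (π (n₀ + 1 + d)).2.2 :=
      (hp.2 (n₀ + 1 + d)).2.symm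
    rw [h2, hf]
    show (gf c₀ w₁ w₂ p₁ r₁ p₂ r₂ (π (n₀ + 1 + d)).1).2 = _
    rw [ih, hgf _ (by rw [List.length_append]; exact gfun_lt hr0 _)]
    show (mkF (p.length + r.length) p.length (gfun p.length r.length (1 + d) + 1)).map ι = _
    rw [mkF_gfun hr0 (1 + d)]
    rfl

lemma tail_col [Nonempty C] {p r : List C} (hr : r ≠ [])
    {ι : Fin (p.length + r.length) → gS w₁ w₂ p₁ r₁ p₂ r₂}
    (hgf : ∀ (j : Fin (p.length + r.length)) (hj : j.1 < (p ++ r).length),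
      gf c₀ w₁ w₂ p₁ r₁ p₂ r₂ (some (ι j)) =
        ((p ++ r)[j.1]'hj, (mkF (p.length + r.length) p.length (j.1 + 1)).map ι))
    {v₀ : gV w₁ w₂ p₁ r₁ p₂ r₂} {π : ℕ → gV w₁ w₂ p₁ r₁ p₂ r₂ × C × gV w₁ w₂ p₁ r₁ p₂ r₂}
    (hp : (gArena c₀ w₁ w₂ p₁ r₁ p₂ r₂).PlayFrom v₀ π) (n₀ : ℕ)
    (hstart : (π (n₀ + 1)).1 = (mkF (p.length + r.length) p.length 1).map ι) :
    ∀ m, 1 ≤ m → (π (n₀ + m)).2.1 = wcat p (wpow r) m := by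
  have hr0 : 0 < r.length := List.length_pos_iff.mpr hr
  intro m hm
  have hd : m = 1 + (m - 1) := by omega
  have hpos := tail_pos hr hgf hp n₀ hstart (m - 1)
  have hidx : n₀ + 1 + (m - 1) = n₀ + m := by omega
  rw [hidx] at hpos
  rw [← hd] at hpos
  have hf := forced hp (n₀ + m) (by rw [hpos]; exact Option.some_ne_none _)
  rw [hf]
  show (gf c₀ w₁ w₂ p₁ r₁ p₂ r₂ (π (n₀ + m)).1).1 = _
  rw [hpos, hgf _ (by rw [List.length_append]; exact gfun_lt hr0 _)]
  exact lasso_get p r hr m _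

end GameLemmas

end RegularMemory
namespace RegularMemory

variable {C : Type}

lemma updStar_append (N : MemStruct C) (m : N.M) (a b : List C) :
    N.updStar m (a ++ b) = N.updStar (N.updStar m a) b := by
  simp [MemStruct.updStar, List.foldl_append]

section GameCols

variable {c₀ : C} {w₁ w₂ p₁ r₁ p₂ r₂ : List C}

lemma cols_generic [Nonempty C] {w p r : List C} (hr : r ≠ [])
    {ιw : Fin w.length → gS w₁ w₂ p₁ r₁ p₂ r₂}
    (hgfw : ∀ i : Fin w.length,
      gf c₀ w₁ w₂ p₁ r₁ p₂ r₂ (some (ιw i)) = (w[i.1], (finOpt w.length (i.1 + 1)).map ιw))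
    {ιb : Fin (p.length + r.length) → gS w₁ w₂ p₁ r₁ p₂ r₂}
    (hgfb : ∀ (j : Fin (p.length + r.length)) (hj : j.1 < (p ++ r).length),
      gf c₀ w₁ w₂ p₁ r₁ p₂ r₂ (some (ιb j)) =
        ((p ++ r)[j.1]'hj, (mkF (p.length + r.length) p.length (j.1 + 1)).map ιb))
    {π : ℕ → gV w₁ w₂ p₁ r₁ p₂ r₂ × C × gV w₁ w₂ p₁ r₁ p₂ r₂}
    (hp : (gArena c₀ w₁ w₂ p₁ r₁ p₂ r₂).PlayFrom ((finOpt w.length 0).map ιw) π)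
    (hchoice : π w.length =
      (none, ((p ++ r).getD 0 c₀, (mkF (p.length + r.length) p.length 1).map ιb))) :
    Arena.playCol π = wcat w (wcat p (wpow r)) := by
  have hr0 : 0 < r.length := List.length_pos_iff.mpr hr
  funext n
  rcases lt_trichotomy n w.length with h | h | h
  · rw [wcat_lt _ _ h]
    exact chain_col hgfw hp n h
  · subst h
    rw [wcat_ge _ _ le_rfl, Nat.sub_self]
    show (π w.length).2.1 = wcat p (wpow r) 0
    rw [hchoice]
    show (p ++ r).getD 0 c₀ = _
    have h0 : 0 < (p ++ r).length := by rw [List.length_append]; omega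
    rw [List.getD_eq_getElem _ _ h0]
    have h1 := lasso_get p r hr 0 (by rw [List.length_append]; exact gfun_lt hr0 0)
    have h2 : (p ++ r)[0] = (p ++ r)[gfun p.length r.length 0]'
        (by rw [List.length_append]; exact gfun_lt hr0 0) := by
      congr 1
      exact (gfun_zero hr0).symm
    rw [h2, h1]
  · rw [wcat_ge _ _ (by omega)]
    have hstart : (π (w.length + 1)).1 = (mkF (p.length + r.length) p.length 1).map ιb := by
      have h2 := (hp.2 w.length).2
      rw [← h2, hchoice]
    have h3 := tail_col hr hgfb hp w.length hstart (n - w.length) (by omega)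
    rw [show w.length + (n - w.length) = n by omega] at h3
    exact h3

end GameCols

lemma game_lemma [Nonempty C] {W : Set (ℕ → C)} {N : MemStruct C}
    (hsuff : SufficesIn N W (fun A => A.IsFinite ∧ A.OneP1))
    (w₁ w₂ p₁ r₁ p₂ r₂ : List C) (hr₁ : r₁ ≠ []) (hr₂ : r₂ ≠ [])
    (hm : N.updStar N.init w₁ = N.updStar N.init w₂)
    (h1 : wcat w₁ (wcat p₁ (wpow r₁)) ∈ W)
    (h2 : wcat w₂ (wcat p₂ (wpow r₂)) ∈ W) :
    wcat w₂ (wcat p₁ (wpow r₁)) ∈ W ∨ wcat w₁ (wcat p₂ (wpow r₂)) ∈ W := by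
  classical
  obtain ⟨c₀⟩ := ‹Nonempty C›
  have hP1 : ∀ v : (gArena c₀ w₁ w₂ p₁ r₁ p₂ r₂).V, (gArena c₀ w₁ w₂ p₁ r₁ p₂ r₂).P1 v :=
    fun _ => trivial
  have hfin : (gArena c₀ w₁ w₂ p₁ r₁ p₂ r₂).IsFinite ∧ (gArena c₀ w₁ w₂ p₁ r₁ p₂ r₂).OneP1 := by
    refine ⟨⟨?_, ?_⟩, fun v => trivial⟩
    · exact inferInstanceAs (Finite (gV w₁ w₂ p₁ r₁ p₂ r₂))
    · exact (Set.finite_range _).union (Set.finite_singleton _)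
  obtain ⟨σ, ⟨nxt, hnxt⟩, hopt⟩ := hsuff _ hfin
  -- chain transition hypotheses
  have hgf1 : ∀ i : Fin w₁.length,
      gf c₀ w₁ w₂ p₁ r₁ p₂ r₂ (some (ι1 w₁ w₂ p₁ r₁ p₂ r₂ i)) =
        (w₁[i.1], (finOpt w₁.length (i.1 + 1)).map (ι1 w₁ w₂ p₁ r₁ p₂ r₂)) := fun i => rfl
  have hgf2 : ∀ i : Fin w₂.length,
      gf c₀ w₁ w₂ p₁ r₁ p₂ r₂ (some (ι2 w₁ w₂ p₁ r₁ p₂ r₂ i)) =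
        (w₂[i.1], (finOpt w₂.length (i.1 + 1)).map (ι2 w₁ w₂ p₁ r₁ p₂ r₂)) := fun i => rfl
  have hgfA : ∀ (j : Fin (p₁.length + r₁.length)) (hj : j.1 < (p₁ ++ r₁).length),
      gf c₀ w₁ w₂ p₁ r₁ p₂ r₂ (some (ιA w₁ w₂ p₁ r₁ p₂ r₂ j)) =
        ((p₁ ++ r₁)[j.1]'hj, (mkF (p₁.length + r₁.length) p₁.length (j.1 + 1)).map
          (ιA w₁ w₂ p₁ r₁ p₂ r₂)) := fun j hj => rfl
  have hgfB : ∀ (j : Fin (p₂.length + r₂.length)) (hj : j.1 < (p₂ ++ r₂).length),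
      gf c₀ w₁ w₂ p₁ r₁ p₂ r₂ (some (ιB w₁ w₂ p₁ r₁ p₂ r₂ j)) =
        ((p₂ ++ r₂)[j.1]'hj, (mkF (p₂.length + r₂.length) p₂.length (j.1 + 1)).map
          (ιB w₁ w₂ p₁ r₁ p₂ r₂)) := fun j hj => rfl
  set s₁ : gV w₁ w₂ p₁ r₁ p₂ r₂ := (finOpt w₁.length 0).map (ι1 w₁ w₂ p₁ r₁ p₂ r₂) with hs₁
  set s₂ : gV w₁ w₂ p₁ r₁ p₂ r₂ := (finOpt w₂.length 0).map (ι2 w₁ w₂ p₁ r₁ p₂ r₂) with hs₂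
  -- the explicit winning strategies
  let σA : (gArena c₀ w₁ w₂ p₁ r₁ p₂ r₂).Strategy :=
    ⟨fun v l => ((gArena c₀ w₁ w₂ p₁ r₁ p₂ r₂).endFrom v l,
        gf c₀ w₁ w₂ p₁ r₁ p₂ r₂ ((gArena c₀ w₁ w₂ p₁ r₁ p₂ r₂).endFrom v l)),
      fun v l _ _ => ⟨Or.inl ⟨_, rfl⟩, rfl⟩⟩
  let pickB : gV w₁ w₂ p₁ r₁ p₂ r₂ → C × gV w₁ w₂ p₁ r₁ p₂ r₂ := fun u =>
    match u with
    | none => galt c₀ w₁ w₂ p₁ r₁ p₂ r₂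
    | some s => gf c₀ w₁ w₂ p₁ r₁ p₂ r₂ (some s)
  have hpickB : ∀ u, (u, pickB u) ∈ gE c₀ w₁ w₂ p₁ r₁ p₂ r₂ := by
    intro u
    match u with
    | none => exact Or.inr rfl
    | some s => exact Or.inl ⟨some s, rfl⟩
  let σB : (gArena c₀ w₁ w₂ p₁ r₁ p₂ r₂).Strategy :=
    ⟨fun v l => ((gArena c₀ w₁ w₂ p₁ r₁ p₂ r₂).endFrom v l,
        pickB ((gArena c₀ w₁ w₂ p₁ r₁ p₂ r₂).endFrom v l)),
      fun v l _ _ => ⟨hpickB _, rfl⟩⟩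
  have winA : σA.WinningFrom W s₁ := by
    intro π hp hc
    have hvnone : (π w₁.length).1 = none := by
      rw [chain_pos hgf1 hp w₁.length le_rfl]
      unfold finOpt
      rw [dif_neg (lt_irrefl _)]
      rfl
    have hend : (gArena c₀ w₁ w₂ p₁ r₁ p₂ r₂).endFrom s₁
        (List.ofFn fun i : Fin w₁.length => π i) = (π w₁.length).1 := endFrom_play hp _
    have hchoice : π w₁.length = (none, gf c₀ w₁ w₂ p₁ r₁ p₂ r₂ none) := by
      rw [hc w₁.length trivial]
      show ((gArena c₀ w₁ w₂ p₁ r₁ p₂ r₂).endFrom s₁ _,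
        gf c₀ w₁ w₂ p₁ r₁ p₂ r₂ ((gArena c₀ w₁ w₂ p₁ r₁ p₂ r₂).endFrom s₁ _)) = _
      rw [hend, hvnone]
      rfl
    erw [cols_generic hr₁ hgf1 hgfA hp hchoice]
    exact h1
  have winB : σB.WinningFrom W s₂ := by
    intro π hp hc
    have hvnone : (π w₂.length).1 = none := by
      rw [chain_pos hgf2 hp w₂.length le_rfl]
      unfold finOpt
      rw [dif_neg (lt_irrefl _)]
      rfl
    have hend : (gArena c₀ w₁ w₂ p₁ r₁ p₂ r₂).endFrom s₂
        (List.ofFn fun i : Fin w₂.length => π i) = (π w₂.length).1 := endFrom_play hp _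
    have hchoice : π w₂.length = (none, galt c₀ w₁ w₂ p₁ r₁ p₂ r₂) := by
      rw [hc w₂.length trivial]
      show ((gArena c₀ w₁ w₂ p₁ r₁ p₂ r₂).endFrom s₂ _,
        pickB ((gArena c₀ w₁ w₂ p₁ r₁ p₂ r₂).endFrom s₂ _)) = _
      rw [hend, hvnone]
      rfl
    erw [cols_generic hr₂ hgf2 hgfB hp hchoice]
    exact h2
  -- plays generated by the memory-based optimal strategy
  have hp1 : (gArena c₀ w₁ w₂ p₁ r₁ p₂ r₂).PlayFrom s₁ (playOf σ s₁) := playOf_isPlay hP1 σ s₁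
  have hp2 : (gArena c₀ w₁ w₂ p₁ r₁ p₂ r₂).PlayFrom s₂ (playOf σ s₂) := playOf_isPlay hP1 σ s₂
  have win1 : Arena.playCol (playOf σ s₁) ∈ W :=
    hopt s₁ ⟨σA, winA⟩ (playOf σ s₁) hp1 (playOf_consistent σ s₁)
  have win2 : Arena.playCol (playOf σ s₂) ∈ W :=
    hopt s₂ ⟨σB, winB⟩ (playOf σ s₂) hp2 (playOf_consistent σ s₂)
  -- color lists of histories
  have hist_col1 : ∀ m, ((histOf σ s₁ (w₁.length + m)).map fun e => e.2.1)
      = w₁ ++ (List.ofFn fun i : Fin m => (playOf σ s₁ (w₁.length + i.1)).2.1) := by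
    intro m
    erw [← ofFn_playOf, List.map_ofFn]
    apply List.ext_getElem (by simp)
    intro t h1' h2'
    have ht : t < w₁.length + m := by simpa using h1'
    simp only [List.getElem_ofFn, Function.comp]
    rcases lt_or_ge t w₁.length with h | h
    · rw [List.getElem_append_left h]
      exact chain_col hgf1 hp1 t h
    · rw [List.getElem_append_right h]
      simp only [List.getElem_ofFn, Fin.val_mk]
      exact congrArg (fun k => (playOf σ s₁ k).2.1)
        (by omega : t = w₁.length + (t - w₁.length))
  have hist_col2 : ∀ m, ((histOf σ s₂ (w₂.length + m)).map fun e => e.2.1)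
      = w₂ ++ (List.ofFn fun i : Fin m => (playOf σ s₂ (w₂.length + i.1)).2.1) := by
    intro m
    erw [← ofFn_playOf, List.map_ofFn]
    apply List.ext_getElem (by simp)
    intro t h1' h2'
    have ht : t < w₂.length + m := by simpa using h1'
    simp only [List.getElem_ofFn, Function.comp]
    rcases lt_or_ge t w₂.length with h | h
    · rw [List.getElem_append_left h]
      exact chain_col hgf2 hp2 t h
    · rw [List.getElem_append_right h]
      simp only [List.getElem_ofFn, Fin.val_mk]
      exact congrArg (fun k => (playOf σ s₂ k).2.1)
        (by omega : t = w₂.length + (t - w₂.length))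
  have vnone1 : (playOf σ s₁ w₁.length).1 = none := by
    rw [chain_pos hgf1 hp1 w₁.length le_rfl]
    unfold finOpt
    rw [dif_neg (lt_irrefl _)]
    rfl
  have vnone2 : (playOf σ s₂ w₂.length).1 = none := by
    rw [chain_pos hgf2 hp2 w₂.length le_rfl]
    unfold finOpt
    rw [dif_neg (lt_irrefl _)]
    rfl
  -- synchronization of the two plays after the choice vertex
  have hsync : ∀ m, playOf σ s₁ (w₁.length + m) = playOf σ s₂ (w₂.length + m) := by
    intro m
    induction m using Nat.strong_induction_on with
    | _ m IH =>
      have hS : (List.ofFn fun i : Fin m => (playOf σ s₁ (w₁.length + i.1)).2.1)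
          = List.ofFn fun i : Fin m => (playOf σ s₂ (w₂.length + i.1)).2.1 := by
        apply List.ext_getElem (by simp)
        intro t h1' h2'
        simp only [List.getElem_ofFn]
        rw [IH t (by simpa using h1')]
      have hend : (playOf σ s₁ (w₁.length + m)).1 = (playOf σ s₂ (w₂.length + m)).1 := by
        cases m with
        | zero => rw [Nat.add_zero, Nat.add_zero, vnone1, vnone2]
        | succ m' =>
          have e1 := (hp1.2 (w₁.length + m')).2
          have e2 := (hp2.2 (w₂.length + m')).2
          rw [show w₁.length + (m' + 1) = w₁.length + m' + 1 by omega, ← e1,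
            show w₂.length + (m' + 1) = w₂.length + m' + 1 by omega, ← e2,
            IH m' (by omega)]
      have hend1 : (gArena c₀ w₁ w₂ p₁ r₁ p₂ r₂).endFrom s₁ (histOf σ s₁ (w₁.length + m))
          = (playOf σ s₁ (w₁.length + m)).1 := by
        erw [← ofFn_playOf]
        exact endFrom_play hp1 _
      have hend2 : (gArena c₀ w₁ w₂ p₁ r₁ p₂ r₂).endFrom s₂ (histOf σ s₂ (w₂.length + m))
          = (playOf σ s₂ (w₂.length + m)).1 := by
        erw [← ofFn_playOf]
        exact endFrom_play hp2 _
      have e1 : playOf σ s₁ (w₁.length + m) = nxt ((playOf σ s₁ (w₁.length + m)).1)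
          (N.updStar N.init (w₁ ++ List.ofFn fun i : Fin m => (playOf σ s₁ (w₁.length + i.1)).2.1)) := by
        show σ.next s₁ _ = _
        rw [hnxt s₁ _ (histOf_valid hP1 σ s₁ _) trivial, hend1, hist_col1 m]
      have e2 : playOf σ s₂ (w₂.length + m) = nxt ((playOf σ s₂ (w₂.length + m)).1)
          (N.updStar N.init (w₂ ++ List.ofFn fun i : Fin m => (playOf σ s₂ (w₂.length + i.1)).2.1)) := by
        show σ.next s₂ _ = _
        rw [hnxt s₂ _ (histOf_valid hP1 σ s₂ _) trivial, hend2, hist_col2 m]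
      rw [e1, e2, hend, ← hS, updStar_append, updStar_append, hm]
  -- colors of the second play
  have hcol2 : Arena.playCol (playOf σ s₂)
      = wcat w₂ (fun i => (playOf σ s₁ (w₁.length + i)).2.1) := by
    funext n
    rcases lt_or_ge n w₂.length with h | h
    · rw [wcat_lt _ _ h]
      exact chain_col hgf2 hp2 n h
    · rw [wcat_ge _ _ h]
      show (playOf σ s₂ n).2.1 = _
      have := congrArg (fun e => e.2.1) (hsync (n - w₂.length))
      rw [show w₂.length + (n - w₂.length) = n by omega] at this
      exact this.symm
  -- case analysis on the edge taken at the choice vertex by the optimal strategy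
  rcases edge_cases (hp1.2 w₁.length).1 with hch | hch
  · -- branch A chosen
    rw [vnone1] at hch
    have hcol1 : Arena.playCol (playOf σ s₁) = wcat w₁ (wcat p₁ (wpow r₁)) :=
      cols_generic hr₁ hgf1 hgfA hp1 hch
    left
    have hx : (fun i => (playOf σ s₁ (w₁.length + i)).2.1) = wcat p₁ (wpow r₁) := by
      funext i
      have h5 : Arena.playCol (playOf σ s₁) (w₁.length + i)
          = wcat w₁ (wcat p₁ (wpow r₁)) (w₁.length + i) := by rw [hcol1]
      rw [wcat_ge _ _ (Nat.le_add_right _ _)] at h5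
      rw [Nat.add_sub_cancel_left] at h5
      exact h5
    rw [← hx]
    rw [← hcol2]
    exact win2
  · -- branch B chosen
    have hcol1 : Arena.playCol (playOf σ s₁) = wcat w₁ (wcat p₂ (wpow r₂)) :=
      cols_generic hr₂ hgf1 hgfB hp1 hch
    right
    rw [← hcol1]
    exact win1

end RegularMemory




namespace RegularMemory

/-- for a regular reachability or safety objective `W`, if the memory
structure `N` suffices to play optimally for `W` in all finite one-player arenas of
Player 1, then `W` is `N`-strongly-monotone. -/
theorem strongMonotony_necessary_regular {C : Type} [Nonempty C]
    (W : Set (ℕ → C))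
    (hform : ∃ A : Set (List C), W = ReachObj A ∨ W = SafeObj A)
    (hreg : FinClasses W)
    (N : MemStruct C)
    (hsuff : SufficesIn N W (fun A => A.IsFinite ∧ A.OneP1)) :
    StronglyMonotone N W := by
  intro w₁ w₂ hmw
  by_contra hcomp
  rw [PrefComparable] at hcomp
  push_neg at hcomp
  obtain ⟨h12, h21⟩ := hcomp
  obtain ⟨x₁, hx₁a, hx₁b⟩ := Set.not_subset.mp h12
  obtain ⟨x₂, hx₂a, hx₂b⟩ := Set.not_subset.mp h21
  obtain ⟨p₁, r₁, hr₁, hz₁a, hz₁b⟩ := exists_periodic_witness hform hreg hx₁a hx₁b h21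
  obtain ⟨p₂, r₂, hr₂, hz₂a, hz₂b⟩ := exists_periodic_witness hform hreg hx₂a hx₂b h12
  rcases game_lemma hsuff w₁ w₂ p₁ r₁ p₂ r₂ hr₁ hr₂ hmw hz₁a hz₂a with h | h
  · exact hz₁b h
  · exact hz₂b h

end RegularMemory
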